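/- Quadratic lower support function: let f : Ω → ℝ be continuous on an interval Ω and twice continuously differentiable except at finitely many points, with left and right derivatives existing everywhere and f'₊(ω) ≥ f'₋(ω) at every ω. Suppose f''(ω) ≥ γ at every point of twice-differentiability. Then for every point ω₀ ∈ Ω where f is differentiable, f(ω) ≥ f(ω₀) + f'(ω₀)(ω − ω₀) + (γ/2)(ω − ω₀)² for all ω ∈ Ω. -/

import Mathlib

open Set Filter Topology

/-- K1: for a convex function, the secant slope up to `p` is at most the left derivative at `p`. -/
lemma slope_le_leftDeriv {S : Set ℝ} {g : ℝ → ℝ} {x p d : ℝ}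
    (hconv : ConvexOn ℝ S g) (hx : x ∈ S) (hp : p ∈ S) (hxp : x < p)
    (hd : HasDerivWithinAt g d (Set.Iic p) p) :
    (g p - g x) / (p - x) ≤ d := by
  rw [hasDerivWithinAt_iff_tendsto_slope] at hd
  have hset : Set.Iic p \ {p} = Set.Iio p := by
    ext y; simp [lt_iff_le_and_ne]
  rw [hset] at hd
  have hev : ∀ᶠ y in 𝓝[<] p, (g p - g x) / (p - x) ≤ slope g p y := by
    filter_upwards [Ioo_mem_nhdsLT hxp, self_mem_nhdsWithin] with y hy hy'
    have hyS : y ∈ S := hconv.1.ordConnected.out hx hp ⟨hy.1.le, hy.2.le⟩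
    have := hconv.secant_mono hp hx hyS hxp.ne (ne_of_lt hy.2) hy.1.le
    calc (g p - g x) / (p - x) = (g x - g p) / (x - p) := by
          rw [← neg_div_neg_eq]; congr 1 <;> ring
      _ ≤ (g y - g p) / (y - p) := this
      _ = slope g p y := by rw [slope_def_field]
  exact ge_of_tendsto hd hev

/-- K2: for a convex function, the secant slope from `p` is at least the right derivative at `p`. -/
lemma rightDeriv_le_slope {S : Set ℝ} {g : ℝ → ℝ} {p z d : ℝ}
    (hconv : ConvexOn ℝ S g) (hp : p ∈ S) (hz : z ∈ S) (hpz : p < z)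
    (hd : HasDerivWithinAt g d (Set.Ici p) p) :
    d ≤ (g z - g p) / (z - p) := by
  rw [hasDerivWithinAt_iff_tendsto_slope] at hd
  have hset : Set.Ici p \ {p} = Set.Ioi p := by
    ext y; simp [lt_iff_le_and_ne, eq_comm]
  rw [hset] at hd
  have hev : ∀ᶠ y in 𝓝[>] p, slope g p y ≤ (g z - g p) / (z - p) := by
    filter_upwards [Ioo_mem_nhdsGT hpz, self_mem_nhdsWithin] with y hy hy'
    have hyS : y ∈ S := hconv.1.ordConnected.out hp hz ⟨hy.1.le, hy.2.le⟩
    have := hconv.secant_mono hp hyS hz (ne_of_gt hy.1) (ne_of_gt hpz) hy.2.le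
    calc slope g p y = (g y - g p) / (y - p) := by rw [slope_def_field]
      _ ≤ (g z - g p) / (z - p) := this
  exact le_of_tendsto hd hev

/-- Extend convexity to a right endpoint by continuity. -/
lemma convexOn_extend_right {S : Set ℝ} {g : ℝ → ℝ} {p : ℝ}
    (hS : Convex ℝ S) (hpS : p ∈ S) (hmax : S ⊆ Set.Iic p)
    (hconv : ConvexOn ℝ (S ∩ Set.Iio p) g) (hcont : ContinuousWithinAt g S p) :
    ConvexOn ℝ S g := by
  rw [convexOn_iff_slope_mono_adjacent]
  refine ⟨hS, fun x y z hx hz hxy hyz => ?_⟩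
  have hy : y ∈ S := hS.ordConnected.out hx hz ⟨hxy.le, hyz.le⟩
  rcases lt_or_eq_of_le (Set.mem_Iic.mp (hmax hz)) with hzp | hzp
  · exact hconv.slope_mono_adjacent ⟨hx, (hxy.trans hyz).trans hzp⟩ ⟨hz, hzp⟩ hxy hyz
  -- z = p
  subst hzp
  have hyp : y < z := hyz
  have hsub : Set.Ioo y z ⊆ S := fun w hw => hS.ordConnected.out hy hz ⟨hw.1.le, hw.2.le⟩
  have hne : (𝓝[Set.Ioo y z] z).NeBot := by
    refine mem_closure_iff_nhdsWithin_neBot.1 ?_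
    rw [closure_Ioo hyp.ne]
    exact ⟨hyp.le, le_rfl⟩
  have htend : Tendsto (fun z' => (g z' - g y) / (z' - y)) (𝓝[Set.Ioo y z] z)
      (𝓝 ((g z - g y) / (z - y))) := by
    have hg : Tendsto g (𝓝[Set.Ioo y z] z) (𝓝 (g z)) :=
      hcont.tendsto.mono_left (nhdsWithin_mono _ hsub)
    have hid : Tendsto (fun z' : ℝ => z' - y) (𝓝[Set.Ioo y z] z) (𝓝 (z - y)) :=
      ((continuous_id.sub continuous_const).tendsto z).mono_left nhdsWithin_le_nhds
    exact (hg.sub tendsto_const_nhds).div hid (sub_ne_zero.2 hyp.ne')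
  refine ge_of_tendsto htend ?_
  filter_upwards [self_mem_nhdsWithin] with z' hz'
  exact hconv.slope_mono_adjacent ⟨hx, hxy.trans hyp⟩ ⟨hsub hz', hz'.2⟩ hxy hz'.1

/-- Extend convexity to a left endpoint by continuity. -/
lemma convexOn_extend_left {S : Set ℝ} {g : ℝ → ℝ} {p : ℝ}
    (hS : Convex ℝ S) (hpS : p ∈ S) (hmin : S ⊆ Set.Ici p)
    (hconv : ConvexOn ℝ (S ∩ Set.Ioi p) g) (hcont : ContinuousWithinAt g S p) :
    ConvexOn ℝ S g := by
  rw [convexOn_iff_slope_mono_adjacent]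
  refine ⟨hS, fun x y z hx hz hxy hyz => ?_⟩
  have hy : y ∈ S := hS.ordConnected.out hx hz ⟨hxy.le, hyz.le⟩
  rcases lt_or_eq_of_le (Set.mem_Ici.mp (hmin hx)) with hpx | hpx
  · exact hconv.slope_mono_adjacent ⟨hx, hpx⟩ ⟨hz, hpx.trans (hxy.trans hyz)⟩ hxy hyz
  -- p = x
  subst hpx
  have hsub : Set.Ioo p y ⊆ S := fun w hw => hS.ordConnected.out hpS hy ⟨hw.1.le, hw.2.le⟩
  have hne : (𝓝[Set.Ioo p y] p).NeBot := by
    refine mem_closure_iff_nhdsWithin_neBot.1 ?_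
    rw [closure_Ioo hxy.ne]
    exact ⟨le_rfl, hxy.le⟩
  have htend : Tendsto (fun x' => (g y - g x') / (y - x')) (𝓝[Set.Ioo p y] p)
      (𝓝 ((g y - g p) / (y - p))) := by
    have hg : Tendsto g (𝓝[Set.Ioo p y] p) (𝓝 (g p)) :=
      hcont.tendsto.mono_left (nhdsWithin_mono _ hsub)
    have hid : Tendsto (fun x' : ℝ => y - x') (𝓝[Set.Ioo p y] p) (𝓝 (y - p)) :=
      ((continuous_const.sub continuous_id).tendsto p).mono_left nhdsWithin_le_nhds
    exact (tendsto_const_nhds.sub hg).div hid (sub_ne_zero.2 hxy.ne')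
  refine le_of_tendsto htend ?_
  filter_upwards [self_mem_nhdsWithin] with x' hx'
  exact hconv.slope_mono_adjacent ⟨hsub hx', hx'.1⟩ ⟨hz, hx'.1.trans (hx'.2.trans hyz)⟩ hx'.2 hyz

/-- Glue two convex pieces at a point where the left derivative is at most the right one. -/
lemma convexOn_glue {S : Set ℝ} {g : ℝ → ℝ} {p dm dp : ℝ}
    (hS : Convex ℝ S) (hpS : p ∈ S)
    (h1 : ConvexOn ℝ (S ∩ Set.Iic p) g) (h2 : ConvexOn ℝ (S ∩ Set.Ici p) g)
    (hdm : HasDerivWithinAt g dm (Set.Iic p) p) (hdp : HasDerivWithinAt g dp (Set.Ici p) p)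
    (hj : dm ≤ dp) : ConvexOn ℝ S g := by
  rw [convexOn_iff_slope_mono_adjacent]
  refine ⟨hS, fun x y z hx hz hxy hyz => ?_⟩
  have hy : y ∈ S := hS.ordConnected.out hx hz ⟨hxy.le, hyz.le⟩
  rcases le_or_gt z p with hzp | hpz
  · exact h1.slope_mono_adjacent ⟨hx, ((hxy.trans hyz).le.trans hzp)⟩ ⟨hz, hzp⟩ hxy hyz
  rcases le_or_gt p x with hpx | hxp
  · exact h2.slope_mono_adjacent ⟨hx, hpx⟩ ⟨hz, hpx.trans (hxy.trans hyz).le⟩ hxy hyz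
  -- x < p < z
  have hpIic : p ∈ S ∩ Set.Iic p := ⟨hpS, Set.self_mem_Iic⟩
  have hpIci : p ∈ S ∩ Set.Ici p := ⟨hpS, Set.self_mem_Ici⟩
  rcases lt_trichotomy y p with hyp | rfl | hpy
  · -- x < y < p < z
    have s1 : (g y - g x) / (y - x) ≤ (g p - g y) / (p - y) :=
      h1.slope_mono_adjacent ⟨hx, hxp.le⟩ hpIic hxy hyp
    have s2 : (g p - g y) / (p - y) ≤ dm :=
      slope_le_leftDeriv h1 ⟨hy, hyp.le⟩ hpIic hyp hdm
    have s3 : dp ≤ (g z - g p) / (z - p) :=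
      rightDeriv_le_slope h2 hpIci ⟨hz, hpz.le⟩ hpz hdp
    have key : (g p - g y) / (p - y) ≤ (g z - g p) / (z - p) :=
      s2.trans (hj.trans s3)
    rw [div_le_div_iff₀ (by linarith) (by linarith)] at key
    refine s1.trans ?_
    rw [div_le_div_iff₀ (by linarith) (by linarith)]
    nlinarith [key]
  · -- y = p
    exact (slope_le_leftDeriv h1 ⟨hx, hxp.le⟩ hpIic hxp hdm).trans
      (hj.trans (rightDeriv_le_slope h2 hpIci ⟨hz, hpz.le⟩ hpz hdp))
  · -- x < p < y < z
    have s0 : (g y - g p) / (y - p) ≤ (g z - g y) / (z - y) :=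
      h2.slope_mono_adjacent hpIci ⟨hz, (hpy.trans hyz).le⟩ hpy hyz
    have sA : (g p - g x) / (p - x) ≤ dm :=
      slope_le_leftDeriv h1 ⟨hx, hxp.le⟩ hpIic hxp hdm
    have sB : dp ≤ (g y - g p) / (y - p) :=
      rightDeriv_le_slope h2 hpIci ⟨hy, hpy.le⟩ hpy hdp
    have key : (g p - g x) / (p - x) ≤ (g y - g p) / (y - p) :=
      sA.trans (hj.trans sB)
    rw [div_le_div_iff₀ (by linarith) (by linarith)] at key
    refine le_trans ?_ s0
    rw [div_le_div_iff₀ (by linarith) (by linarith)]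
    nlinarith [key]

lemma ContDiffAt_two_differentiableAt_deriv {f : ℝ → ℝ} {x : ℝ}
    (h : ContDiffAt ℝ 2 f x) : DifferentiableAt ℝ (deriv f) x := by
  have h1 : ContDiffAt ℝ 1 (fderiv ℝ f) x := h.fderiv_right (by norm_num)
  have h2 : ContDiffAt ℝ 1 (fun y => fderiv ℝ f y 1) x := h1.clm_apply contDiffAt_const
  exact h2.differentiableAt (by norm_num)

lemma quad_hasDerivAt (γ : ℝ) (x : ℝ) :
    HasDerivAt (fun y : ℝ => γ / 2 * y ^ 2) (γ * x) x := by
  have := (hasDerivAt_pow 2 x).const_mul (γ / 2)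
  refine this.congr_deriv ?_
  push_cast
  ring

lemma convexOn_base {S : Set ℝ} {f : ℝ → ℝ} {γ : ℝ}
    (hS : Convex ℝ S) (hcont : ContinuousOn f S)
    (hC2 : ∀ ω ∈ S, ContDiffAt ℝ 2 f ω)
    (hsec : ∀ ω ∈ S, γ ≤ deriv (deriv f) ω) :
    ConvexOn ℝ S (fun x => f x - γ / 2 * x ^ 2) := by
  refine convexOn_of_hasDerivWithinAt2_nonneg (f' := fun x => deriv f x - γ * x)
    (f'' := fun x => deriv (deriv f) x - γ) hS
    (hcont.sub ((continuous_const.mul (continuous_pow 2)).continuousOn)) ?_ ?_ ?_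
  · intro x hx
    have hdx : HasDerivAt f (deriv f x) x :=
      ((hC2 x (interior_subset hx)).differentiableAt (by norm_num)).hasDerivAt
    exact ((hdx.sub (quad_hasDerivAt γ x))).hasDerivWithinAt
  · intro x hx
    have hdx : HasDerivAt (deriv f) (deriv (deriv f) x) x :=
      (ContDiffAt_two_differentiableAt_deriv (hC2 x (interior_subset hx))).hasDerivAt
    have hlin : HasDerivAt (fun y : ℝ => γ * y) γ x := by
      simpa using (hasDerivAt_id x).const_mul γ
    exact (hdx.sub hlin).hasDerivWithinAt
  · intro x hx
    simpa using sub_nonneg.mpr (hsec x (interior_subset hx))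

lemma convexOn_aux (f f'p f'm : ℝ → ℝ) (γ : ℝ) (Γ : Finset ℝ) :
    ∀ S : Set ℝ, Convex ℝ S → ContinuousOn f S →
    (∀ ω ∈ S, HasDerivWithinAt f (f'p ω) (Set.Ici ω) ω) →
    (∀ ω ∈ S, HasDerivWithinAt f (f'm ω) (Set.Iic ω) ω) →
    (∀ ω ∈ S, f'm ω ≤ f'p ω) →
    (∀ ω ∈ S, ω ∉ Γ → ContDiffAt ℝ 2 f ω) →
    (∀ ω ∈ S, ω ∉ Γ → γ ≤ deriv (deriv f) ω) →
    ConvexOn ℝ S (fun x => f x - γ / 2 * x ^ 2) := by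
  induction Γ using Finset.induction_on with
  | empty =>
    intro S hS hc _ _ _ h2 hs
    exact convexOn_base hS hc (fun ω hω => h2 ω hω (Finset.notMem_empty ω))
      (fun ω hω => hs ω hω (Finset.notMem_empty ω))
  | @insert p Γ' hpΓ IH =>
    intro S hS hc hplus hminus hjump h2 hs
    by_cases hpS : p ∈ S
    · -- glue at p
      have hgc : ContinuousOn (fun x => f x - γ / 2 * x ^ 2) S :=
        hc.sub ((continuous_const.mul (continuous_pow 2)).continuousOn)
      have hIio : (S ∩ Set.Iic p) ∩ Set.Iio p = S ∩ Set.Iio p := by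
        ext w; constructor
        · rintro ⟨⟨h1, _⟩, h2⟩; exact ⟨h1, h2⟩
        · rintro ⟨h1, h2⟩; exact ⟨⟨h1, le_of_lt (Set.mem_Iio.mp h2)⟩, h2⟩
      have hIoi : (S ∩ Set.Ici p) ∩ Set.Ioi p = S ∩ Set.Ioi p := by
        ext w; constructor
        · rintro ⟨⟨h1, _⟩, h2⟩; exact ⟨h1, h2⟩
        · rintro ⟨h1, h2⟩; exact ⟨⟨h1, le_of_lt (Set.mem_Ioi.mp h2)⟩, h2⟩
      have hleft : ConvexOn ℝ (S ∩ Set.Iic p) (fun x => f x - γ / 2 * x ^ 2) := by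
        refine convexOn_extend_right (hS.inter (convex_Iic p)) ⟨hpS, Set.self_mem_Iic⟩
          Set.inter_subset_right ?_ ((hgc p hpS).mono Set.inter_subset_left)
        rw [hIio]
        refine IH (S ∩ Set.Iio p) (hS.inter (convex_Iio p))
          (hc.mono Set.inter_subset_left)
          (fun ω hω => hplus ω hω.1) (fun ω hω => hminus ω hω.1)
          (fun ω hω => hjump ω hω.1) ?_ ?_
        · intro ω hω hωΓ
          exact h2 ω hω.1 (by simp [Finset.mem_insert, hωΓ, ne_of_lt (Set.mem_Iio.mp hω.2)])
        · intro ω hω hωΓ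
          exact hs ω hω.1 (by simp [Finset.mem_insert, hωΓ, ne_of_lt (Set.mem_Iio.mp hω.2)])
      have hright : ConvexOn ℝ (S ∩ Set.Ici p) (fun x => f x - γ / 2 * x ^ 2) := by
        refine convexOn_extend_left (hS.inter (convex_Ici p)) ⟨hpS, Set.self_mem_Ici⟩
          Set.inter_subset_right ?_ ((hgc p hpS).mono Set.inter_subset_left)
        rw [hIoi]
        refine IH (S ∩ Set.Ioi p) (hS.inter (convex_Ioi p))
          (hc.mono Set.inter_subset_left)
          (fun ω hω => hplus ω hω.1) (fun ω hω => hminus ω hω.1)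
          (fun ω hω => hjump ω hω.1) ?_ ?_
        · intro ω hω hωΓ
          exact h2 ω hω.1 (by simp [Finset.mem_insert, hωΓ, ne_of_gt (Set.mem_Ioi.mp hω.2)])
        · intro ω hω hωΓ
          exact hs ω hω.1 (by simp [Finset.mem_insert, hωΓ, ne_of_gt (Set.mem_Ioi.mp hω.2)])
      refine convexOn_glue hS hpS hleft hright
        (((hminus p hpS).sub (quad_hasDerivAt γ p).hasDerivWithinAt))
        (((hplus p hpS).sub (quad_hasDerivAt γ p).hasDerivWithinAt))
        (by simpa using hjump p hpS)
    · refine IH S hS hc hplus hminus hjump ?_ ?_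
      · intro ω hω hωΓ
        refine h2 ω hω ?_
        simp only [Finset.mem_insert]
        rintro (rfl | h)
        · exact hpS hω
        · exact hωΓ h
      · intro ω hω hωΓ
        refine hs ω hω ?_
        simp only [Finset.mem_insert]
        rintro (rfl | h)
        · exact hpS hω
        · exact hωΓ h


/-- Quadratic lower support: if `f` is continuous on an interval `Ω`, twice continuously
differentiable off a finite set `Γ` with `f'' ≥ γ` there, has one-sided derivatives
everywhere with `f'₋ ≤ f'₊`, then about any point `ω₀ ∈ Ω` of differentiability,
`f(ω) ≥ f(ω₀) + f'(ω₀)(ω - ω₀) + (γ/2)(ω - ω₀)²` on `Ω`. -/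
theorem stmt14 (Ω : Set ℝ) (hΩ : Convex ℝ Ω) (f f'p f'm : ℝ → ℝ) (γ : ℝ) (Γ : Finset ℝ)
    (hcont : ContinuousOn f Ω)
    (hplus : ∀ ω ∈ Ω, HasDerivWithinAt f (f'p ω) (Set.Ici ω) ω)
    (hminus : ∀ ω ∈ Ω, HasDerivWithinAt f (f'm ω) (Set.Iic ω) ω)
    (hjump : ∀ ω ∈ Ω, f'm ω ≤ f'p ω)
    (hC2 : ∀ ω ∈ Ω, ω ∉ Γ → ContDiffAt ℝ 2 f ω)
    (hsec : ∀ ω ∈ Ω, ω ∉ Γ → γ ≤ deriv (deriv f) ω)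
    (ω₀ : ℝ) (hω₀ : ω₀ ∈ Ω) (hdiff : DifferentiableAt ℝ f ω₀) :
    ∀ ω ∈ Ω, f ω₀ + deriv f ω₀ * (ω - ω₀) + γ / 2 * (ω - ω₀) ^ 2 ≤ f ω := by
  have hconv : ConvexOn ℝ Ω (fun x => f x - γ / 2 * x ^ 2) :=
    convexOn_aux f f'p f'm γ Γ Ω hΩ hcont hplus hminus hjump hC2 hsec
  have hg0 : HasDerivAt (fun x => f x - γ / 2 * x ^ 2) (deriv f ω₀ - γ * ω₀) ω₀ :=
    hdiff.hasDerivAt.sub (quad_hasDerivAt γ ω₀)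
  intro ω hω
  rcases lt_trichotomy ω ω₀ with hlt | rfl | hgt
  · have key : ((f ω₀ - γ / 2 * ω₀ ^ 2) - (f ω - γ / 2 * ω ^ 2)) / (ω₀ - ω)
        ≤ deriv f ω₀ - γ * ω₀ :=
      slope_le_leftDeriv hconv hω hω₀ hlt hg0.hasDerivWithinAt
    rw [div_le_iff₀ (by linarith)] at key
    nlinarith [key]
  · simp
  · have key : deriv f ω₀ - γ * ω₀
        ≤ ((f ω - γ / 2 * ω ^ 2) - (f ω₀ - γ / 2 * ω₀ ^ 2)) / (ω - ω₀) :=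
      rightDeriv_le_slope hconv hω₀ hω hgt hg0.hasDerivWithinAt
    rw [le_div_iff₀ (by linarith)] at key
    nlinarith [key]
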